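/- Let p ∈ ℤ, let q ≥ 1 be an integer, let κ ≥ 2 be even, K = κq, σ ∈ {+1, −1}, and let τ = 2πp/q or τ = 2πp/q². Let U⁰ ∈ ℂ^{B^K} satisfy (F_K U⁰)_j = 0 for every j ∈ B^K not divisible by q, and define the splitting iterates U^{n+1} = e^{iτΔ^K}((e^{−iστ|U^n_k|²}U^n_k)_k) for n ≥ 0. Then for every n ≥ 0 and every k ∈ B^K, U^n_k = e^{−iσnτ|U⁰_k|²}U⁰_k. -/

import Mathlib

/-- The index set `B^K = {−K/2, …, K/2−1}` (for `K` even). -/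
noncomputable def BK (K : ℕ) : Finset ℤ := Finset.Icc (-((K : ℤ) / 2)) ((K : ℤ) / 2 - 1)

/-- The discrete Fourier transform `(F_K U)_j = (1/K) Σ_{k∈B^K} e^{−2πijk/K} U_k`. -/
noncomputable def dft (K : ℕ) (U : ℤ → ℂ) (j : ℤ) : ℂ :=
  (1 / (K : ℂ)) * ∑ k ∈ BK K,
    Complex.exp (-(2 * (Real.pi : ℂ) * Complex.I * (j : ℂ) * (k : ℂ)) / (K : ℂ)) * U k

/-- The inverse discrete Fourier transform `(F_K⁻¹ W)_k = Σ_{j∈B^K} e^{2πijk/K} W_j`. -/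
noncomputable def idft (K : ℕ) (W : ℤ → ℂ) (k : ℤ) : ℂ :=
  ∑ j ∈ BK K,
    Complex.exp ((2 * (Real.pi : ℂ) * Complex.I * (j : ℂ) * (k : ℂ)) / (K : ℂ)) * W j

/-- The discrete `ℓ²` norm: `‖U‖_{ℓ²}² = (2π/K) Σ_{k∈B^K} |U_k|²`. -/
noncomputable def l2normK (K : ℕ) (U : ℤ → ℂ) : ℝ :=
  Real.sqrt ((2 * Real.pi / K) * ∑ k ∈ BK K, ‖U k‖ ^ 2)

/-- The discrete `h¹` norm: `‖U‖_{h¹}² = (2π/K) Σ_{k∈B^K} |(U_{k+1}−U_k)/δx|²`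
with `δx = 2π/K`. -/
noncomputable def h1normK (K : ℕ) (U : ℤ → ℂ) : ℝ :=
  Real.sqrt ((2 * Real.pi / K) *
    ∑ k ∈ BK K, ‖(U (k + 1) - U k) / ((2 * Real.pi / K : ℝ) : ℂ)‖ ^ 2)

/-- The discrete kinetic energy `T^K(W) = (1/K) Σ_{j∈B^K} j²|W_j|²`. -/
noncomputable def tK (K : ℕ) (W : ℤ → ℂ) : ℝ :=
  (1 / (K : ℝ)) * ∑ j ∈ BK K, (j : ℝ) ^ 2 * ‖W j‖ ^ 2

/-- The discrete free Schrödinger flow `e^{itΔ^K}U = F_K⁻¹(j ↦ e^{−itj²}(F_K U)_j)`. -/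
noncomputable def freeFlowK (K : ℕ) (t : ℝ) (U : ℤ → ℂ) : ℤ → ℂ :=
  idft K (fun j => Complex.exp (-(Complex.I * (t : ℂ)) * (j : ℂ) ^ 2) * dft K U j)

open Complex Finset

lemma exp_two_pi_int (c : ℤ) : Complex.exp ((c:ℂ) * (2 * (Real.pi:ℂ) * Complex.I)) = 1 := by
  simpa [mul_comm, mul_assoc, mul_left_comm] using Complex.exp_int_mul_two_pi_mul_I c

lemma dvd_of_exp_eq_one (N : ℕ) (hN : 1 ≤ N) (m : ℤ)
    (h : Complex.exp ((2 * (Real.pi:ℂ) * Complex.I * (m:ℂ)) / (N:ℂ)) = 1) : (N:ℤ) ∣ m := by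
  rw [Complex.exp_eq_one_iff] at h
  obtain ⟨n, hn⟩ := h
  have hN0 : (N:ℂ) ≠ 0 := Nat.cast_ne_zero.mpr (by omega)
  have hpi : (Real.pi:ℂ) ≠ 0 := Complex.ofReal_ne_zero.mpr Real.pi_ne_zero
  field_simp at hn
  have key : (2*(Real.pi:ℂ)*Complex.I) * (m:ℂ) = (2*(Real.pi:ℂ)*Complex.I) * ((N:ℂ) * (n:ℂ)) := by
    linear_combination (2*(Real.pi:ℂ)*Complex.I) * hn
  have h2 : (m:ℂ) = (N:ℂ) * (n:ℂ) :=
    mul_left_cancel₀ (mul_ne_zero (mul_ne_zero two_ne_zero hpi) Complex.I_ne_zero) key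
  exact ⟨n, by exact_mod_cast h2⟩

lemma geom_zero (N : ℕ) (ω : ℂ) (hω1 : ω ≠ 1) (hωN : ω ^ N = 1) :
    ∑ t ∈ Finset.range N, ω ^ t = 0 := by
  rw [geom_sum_eq hω1, hωN, sub_self, zero_div]

lemma sum_BK (K : ℕ) (hKe : Even K) (f : ℤ → ℂ) :
    ∑ k ∈ BK K, f k = ∑ i ∈ Finset.range K, f ((i:ℤ) - (K:ℤ)/2) := by
  have hK2 : (K:ℤ) % 2 = 0 := by obtain ⟨t, ht⟩ := hKe; omega
  refine Finset.sum_nbij' (fun k => (k + (K:ℤ)/2).toNat) (fun i => (i:ℤ) - (K:ℤ)/2)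
    ?_ ?_ ?_ ?_ ?_
  · intro a ha
    simp only [BK, Finset.mem_Icc] at ha
    simp only [Finset.mem_range]
    omega
  · intro a ha
    simp only [Finset.mem_range] at ha
    simp only [BK, Finset.mem_Icc]
    omega
  · intro a ha
    simp only [BK, Finset.mem_Icc] at ha
    beta_reduce
    omega
  · intro a ha
    simp only [Finset.mem_range] at ha
    beta_reduce
    omega
  · intro a ha
    simp only [BK, Finset.mem_Icc] at ha
    beta_reduce
    congr 1
    omega

lemma BK_card (K : ℕ) (hKe : Even K) : (BK K).card = K := by
  have hK2 : (K:ℤ) % 2 = 0 := by obtain ⟨t, ht⟩ := hKe; omega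
  rw [BK, Int.card_Icc]
  omega

lemma char_sum (K : ℕ) (hK1 : 1 ≤ K) (hKe : Even K) (m : ℤ) :
    ∑ j ∈ BK K, Complex.exp ((2 * (Real.pi:ℂ) * Complex.I * (j:ℂ) * (m:ℂ)) / (K:ℂ)) =
      if (K:ℤ) ∣ m then (K:ℂ) else 0 := by
  have hK0 : (K:ℂ) ≠ 0 := Nat.cast_ne_zero.mpr (by omega)
  by_cases hd : (K:ℤ) ∣ m
  · obtain ⟨c, rfl⟩ := hd
    rw [if_pos ⟨c, rfl⟩]
    have hterm : ∀ j ∈ BK K,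
        Complex.exp ((2 * (Real.pi:ℂ) * Complex.I * (j:ℂ) * (((K:ℤ) * c : ℤ):ℂ)) / (K:ℂ)) = 1 := by
      intro j _
      have he : (2 * (Real.pi:ℂ) * Complex.I * (j:ℂ) * (((K:ℤ) * c : ℤ):ℂ)) / (K:ℂ)
          = ((j * c : ℤ):ℂ) * (2 * (Real.pi:ℂ) * Complex.I) := by
        push_cast
        field_simp
      rw [he, exp_two_pi_int]
    rw [Finset.sum_congr rfl hterm, Finset.sum_const, BK_card K hKe, nsmul_eq_mul, mul_one]
  · rw [if_neg hd, sum_BK K hKe]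
    set ω := Complex.exp ((2 * (Real.pi:ℂ) * Complex.I * (m:ℂ)) / (K:ℂ)) with hω
    have hterm : ∀ i ∈ Finset.range K,
        Complex.exp ((2 * (Real.pi:ℂ) * Complex.I * (((i:ℤ) - (K:ℤ)/2 : ℤ):ℂ) * (m:ℂ)) / (K:ℂ))
          = Complex.exp ((2 * (Real.pi:ℂ) * Complex.I * ((-((K:ℤ)/2) : ℤ):ℂ) * (m:ℂ)) / (K:ℂ)) * ω ^ i := by
      intro i _
      rw [hω, ← Complex.exp_nat_mul, ← Complex.exp_add]
      congr 1
      push_cast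
      field_simp
      ring
    calc ∑ i ∈ Finset.range K,
          Complex.exp ((2 * (Real.pi:ℂ) * Complex.I * ((((i:ℤ) - (K:ℤ)/2 : ℤ)):ℂ) * (m:ℂ)) / (K:ℂ))
        = ∑ i ∈ Finset.range K,
          Complex.exp ((2 * (Real.pi:ℂ) * Complex.I * ((-((K:ℤ)/2) : ℤ):ℂ) * (m:ℂ)) / (K:ℂ)) * ω ^ i :=
          Finset.sum_congr rfl hterm
      _ = Complex.exp ((2 * (Real.pi:ℂ) * Complex.I * ((-((K:ℤ)/2) : ℤ):ℂ) * (m:ℂ)) / (K:ℂ)) *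
          ∑ i ∈ Finset.range K, ω ^ i := by rw [Finset.mul_sum]
      _ = 0 := by
          have hωK : ω ^ K = 1 := by
            rw [hω, ← Complex.exp_nat_mul]
            have he : (K:ℂ) * ((2 * (Real.pi:ℂ) * Complex.I * (m:ℂ)) / (K:ℂ))
                = (m:ℂ) * (2 * (Real.pi:ℂ) * Complex.I) := by field_simp
            rw [he]; exact exp_two_pi_int m
          have hω1 : ω ≠ 1 := fun h => hd (dvd_of_exp_eq_one K hK1 m h)
          rw [geom_zero K ω hω1 hωK, mul_zero]

lemma per_shift (c : ℕ) (V : ℤ → ℂ) (hper : ∀ j, V (j + c) = V j) (x : ℤ) :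
    ∀ t : ℤ, V (x + c * t) = V x := by
  intro t
  induction t using Int.induction_on with
  | zero => simp
  | succ n ih =>
      have h1 : x + (c:ℤ) * ((n:ℤ) + 1) = (x + (c:ℤ) * n) + c := by ring
      rw [h1, hper, ih]
  | pred n ih =>
      have h1 : x + (c:ℤ) * (-(n:ℤ) - 1) = (x + (c:ℤ) * (-(n:ℤ))) - c := by ring
      have h2 := hper ((x + (c:ℤ) * (-(n:ℤ))) - c)
      rw [sub_add_cancel] at h2
      rw [h1, ← h2]
      exact ih

lemma inversion (K : ℕ) (hK1 : 1 ≤ K) (hKe : Even K) (V : ℤ → ℂ)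
    (hper : ∀ j, V (j + K) = V j) (k : ℤ) : idft K (dft K V) k = V k := by
  have hK0 : (K:ℂ) ≠ 0 := Nat.cast_ne_zero.mpr (by omega)
  have hKz : (K:ℤ) ≠ 0 := by omega
  have hKpos : (0:ℤ) < K := by omega
  obtain ⟨t2, ht2⟩ := hKe
  have hKhalf : (K:ℤ)/2 + (K:ℤ)/2 = K := by omega
  have step1 : idft K (dft K V) k
      = ∑ j ∈ BK K, ∑ l ∈ BK K, (1/(K:ℂ)) *
          (Complex.exp ((2 * (Real.pi:ℂ) * Complex.I * (j:ℂ) * ((k - l : ℤ):ℂ)) / (K:ℂ)) * V l) := by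
    unfold idft dft
    refine Finset.sum_congr rfl fun j _ => ?_
    simp only [Finset.mul_sum]
    refine Finset.sum_congr rfl fun l _ => ?_
    have hexp : Complex.exp ((2 * (Real.pi:ℂ) * Complex.I * (j:ℂ) * (k:ℂ)) / (K:ℂ)) *
        Complex.exp (-(2 * (Real.pi:ℂ) * Complex.I * (j:ℂ) * (l:ℂ)) / (K:ℂ))
        = Complex.exp ((2 * (Real.pi:ℂ) * Complex.I * (j:ℂ) * ((k - l : ℤ):ℂ)) / (K:ℂ)) := by
      rw [← Complex.exp_add]
      congr 1
      push_cast
      field_simp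
      ring
    calc Complex.exp ((2 * (Real.pi:ℂ) * Complex.I * (j:ℂ) * (k:ℂ)) / (K:ℂ)) *
          (1/(K:ℂ) * (Complex.exp (-(2 * (Real.pi:ℂ) * Complex.I * (j:ℂ) * (l:ℂ)) / (K:ℂ)) * V l))
        = 1/(K:ℂ) * ((Complex.exp ((2 * (Real.pi:ℂ) * Complex.I * (j:ℂ) * (k:ℂ)) / (K:ℂ)) *
            Complex.exp (-(2 * (Real.pi:ℂ) * Complex.I * (j:ℂ) * (l:ℂ)) / (K:ℂ))) * V l) := by ring
      _ = 1/(K:ℂ) * (Complex.exp ((2 * (Real.pi:ℂ) * Complex.I * (j:ℂ) * ((k - l : ℤ):ℂ)) / (K:ℂ)) * V l) := by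
          rw [hexp]
  rw [step1, Finset.sum_comm]
  have step2 : ∀ l ∈ BK K,
      ∑ j ∈ BK K, (1/(K:ℂ)) *
          (Complex.exp ((2 * (Real.pi:ℂ) * Complex.I * (j:ℂ) * ((k - l : ℤ):ℂ)) / (K:ℂ)) * V l)
        = (1/(K:ℂ)) * ((if (K:ℤ) ∣ (k - l) then (K:ℂ) else 0) * V l) := by
    intro l _
    rw [← Finset.mul_sum, ← Finset.sum_mul, char_sum K hK1 ⟨t2, ht2⟩ (k - l)]
  rw [Finset.sum_congr rfl step2]
  set l₀ : ℤ := (k + (K:ℤ)/2) % K - (K:ℤ)/2 with hl₀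
  have hmod0 : 0 ≤ (k + (K:ℤ)/2) % K := Int.emod_nonneg _ hKz
  have hmod1 : (k + (K:ℤ)/2) % K < K := Int.emod_lt_of_pos _ hKpos
  have hdivfact := Int.emod_add_mul_ediv (k + (K:ℤ)/2) K
  have hl₀mem : l₀ ∈ BK K := by
    simp only [BK, Finset.mem_Icc, hl₀]
    omega
  have hdvd0 : (K:ℤ) ∣ (k - l₀) := ⟨(k + (K:ℤ)/2)/K, by linarith⟩
  rw [Finset.sum_eq_single l₀]
  · rw [if_pos hdvd0, ← mul_assoc]
    rw [one_div, inv_mul_cancel₀ hK0, one_mul]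
    obtain ⟨c, hc⟩ := hdvd0
    have : k = l₀ + (K:ℤ) * c := by linarith
    rw [this, per_shift K V hper l₀ c]
  · intro b hb hbl
    have hnd : ¬ (K:ℤ) ∣ (k - b) := by
      intro hd
      have hdd : (K:ℤ) ∣ (l₀ - b) := by
        have := dvd_sub hd hdvd0
        have he : (k - b) - (k - l₀) = l₀ - b := by ring
        rwa [he] at this
      have habs : |l₀ - b| < (K:ℤ) := by
        simp only [BK, Finset.mem_Icc] at hb hl₀mem
        rw [abs_lt]
        omega
      have := Int.eq_zero_of_abs_lt_dvd hdd habs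
      exact hbl (by omega)
    rw [if_neg hnd, zero_mul, mul_zero]
  · intro h
    exact absurd hl₀mem h

lemma sum_range_mul_split (κ q : ℕ) (g : ℕ → ℂ) :
    ∑ i ∈ Finset.range (κ * q), g i
      = ∑ t ∈ Finset.range q, ∑ r ∈ Finset.range κ, g (κ * t + r) := by
  induction q with
  | zero => simp
  | succ n ih =>
      have h1 : κ * (n + 1) = κ * n + κ := by ring
      rw [h1, Finset.sum_range_add, ih, Finset.sum_range_succ]

lemma dft_vanish (q κ : ℕ) (hq : 1 ≤ q) (hκ1 : 1 ≤ κ) (hκe : Even κ) (V : ℤ → ℂ)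
    (hper : ∀ k, V (k + (κ:ℤ)) = V k) (j : ℤ) (hj : ¬ ((q:ℤ) ∣ j)) :
    dft (κ * q) V j = 0 := by
  have hq0 : (q:ℂ) ≠ 0 := Nat.cast_ne_zero.mpr (by omega)
  have hκ0 : (κ:ℂ) ≠ 0 := Nat.cast_ne_zero.mpr (by omega)
  have hKe : Even (κ * q) := hκe.mul_right q
  rw [dft, sum_BK (κ * q) hKe]
  rw [sum_range_mul_split κ q]
  set ω : ℂ := Complex.exp ((2 * (Real.pi:ℂ) * Complex.I * ((-j : ℤ):ℂ)) / (q:ℂ)) with hω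
  have hωq : ω ^ q = 1 := by
    rw [hω, ← Complex.exp_nat_mul]
    have he : (q:ℂ) * ((2 * (Real.pi:ℂ) * Complex.I * ((-j : ℤ):ℂ)) / (q:ℂ))
        = ((-j : ℤ):ℂ) * (2 * (Real.pi:ℂ) * Complex.I) := by field_simp
    rw [he]; exact exp_two_pi_int (-j)
  have hω1 : ω ≠ 1 := by
    intro h
    exact hj (Int.dvd_neg.mp (dvd_of_exp_eq_one q hq (-j) h))
  have hterm : ∀ t ∈ Finset.range q, ∀ r ∈ Finset.range κ,
      Complex.exp (-(2 * (Real.pi:ℂ) * Complex.I * (j:ℂ) *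
          ((((κ * t + r : ℕ):ℤ) - ((κ*q:ℕ):ℤ)/2 : ℤ):ℂ)) / ((κ*q:ℕ):ℂ)) *
        V (((κ * t + r : ℕ):ℤ) - ((κ*q:ℕ):ℤ)/2)
      = ω ^ t * (Complex.exp (-(2 * (Real.pi:ℂ) * Complex.I * (j:ℂ) *
          ((((r:ℕ):ℤ) - ((κ*q:ℕ):ℤ)/2 : ℤ):ℂ)) / ((κ*q:ℕ):ℂ)) *
        V (((r:ℕ):ℤ) - ((κ*q:ℕ):ℤ)/2)) := by
    intro t _ r _
    have hV : V (((κ * t + r : ℕ):ℤ) - ((κ*q:ℕ):ℤ)/2)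
        = V (((r:ℕ):ℤ) - ((κ*q:ℕ):ℤ)/2) := by
      have harg : ((κ * t + r : ℕ):ℤ) - ((κ*q:ℕ):ℤ)/2
          = (((r:ℕ):ℤ) - ((κ*q:ℕ):ℤ)/2) + (κ:ℤ) * (t:ℤ) := by push_cast; ring
      rw [harg, per_shift κ V hper]
    have hexp : Complex.exp (-(2 * (Real.pi:ℂ) * Complex.I * (j:ℂ) *
          ((((κ * t + r : ℕ):ℤ) - ((κ*q:ℕ):ℤ)/2 : ℤ):ℂ)) / ((κ*q:ℕ):ℂ))
        = ω ^ t * Complex.exp (-(2 * (Real.pi:ℂ) * Complex.I * (j:ℂ) *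
          ((((r:ℕ):ℤ) - ((κ*q:ℕ):ℤ)/2 : ℤ):ℂ)) / ((κ*q:ℕ):ℂ)) := by
      rw [hω, ← Complex.exp_nat_mul, ← Complex.exp_add]
      congr 1
      push_cast
      field_simp
      ring
    rw [hV, hexp, mul_assoc]
  have hsum : ∀ t ∈ Finset.range q,
      (∑ r ∈ Finset.range κ,
        Complex.exp (-(2 * (Real.pi:ℂ) * Complex.I * (j:ℂ) *
          ((((κ * t + r : ℕ):ℤ) - ((κ*q:ℕ):ℤ)/2 : ℤ):ℂ)) / ((κ*q:ℕ):ℂ)) *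
        V (((κ * t + r : ℕ):ℤ) - ((κ*q:ℕ):ℤ)/2))
      = ω ^ t * ∑ r ∈ Finset.range κ,
          Complex.exp (-(2 * (Real.pi:ℂ) * Complex.I * (j:ℂ) *
            ((((r:ℕ):ℤ) - ((κ*q:ℕ):ℤ)/2 : ℤ):ℂ)) / ((κ*q:ℕ):ℂ)) *
          V (((r:ℕ):ℤ) - ((κ*q:ℕ):ℤ)/2) := by
    intro t ht
    rw [Finset.mul_sum]
    exact Finset.sum_congr rfl (fun r hr => hterm t ht r hr)
  rw [Finset.sum_congr rfl hsum, ← Finset.sum_mul, geom_zero q ω hω1 hωq, zero_mul, mul_zero]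

/-- For `K = κq` (`κ ≥ 2` even), `σ = ±1`, and the resonant time step
`τ = 2πp/q` or `τ = 2πp/q²`, if `U⁰ ∈ W_{κ,q}` then the splitting iterates
`U^{n+1} = e^{iτΔ^K}((e^{−iστ|U^n_k|²}U^n_k)_k)` satisfy
`U^n_k = e^{−iσnτ|U⁰_k|²}U⁰_k` for every `n ≥ 0` and every `k ∈ B^K`. -/
theorem stmt19 (p : ℤ) (q : ℕ) (hq : 1 ≤ q) (κ : ℕ) (hκe : Even κ) (hκ2 : 2 ≤ κ)
    (K : ℕ) (hK : K = κ * q) (σ : ℝ) (hσ : σ = 1 ∨ σ = -1) (τ : ℝ)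
    (hτ : τ = 2 * Real.pi * (p : ℝ) / (q : ℝ) ∨ τ = 2 * Real.pi * (p : ℝ) / ((q : ℝ) ^ 2))
    (U0 : ℤ → ℂ) (hU0_per : ∀ j : ℤ, U0 (j + K) = U0 j)
    (hU0q : ∀ j ∈ BK K, ¬ ((q : ℤ) ∣ j) → dft K U0 j = 0)
    (Un : ℕ → ℤ → ℂ) (h0 : Un 0 = U0)
    (hrec : ∀ n : ℕ, Un (n + 1) =
      freeFlowK K τ (fun k => Complex.exp (-(Complex.I * (σ : ℂ) * (τ : ℂ)) *
        ((‖Un n k‖ : ℂ)) ^ 2) * Un n k)) :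
    ∀ n : ℕ, ∀ k ∈ BK K,
      Un n k =
        Complex.exp (-(Complex.I * (σ : ℂ) * (n : ℂ) * (τ : ℂ)) *
          ((‖U0 k‖ : ℂ)) ^ 2) * U0 k := by
  subst hK
  have hκ1 : 1 ≤ κ := by omega
  have hK1 : 1 ≤ κ * q := Nat.one_le_iff_ne_zero.mpr (Nat.mul_ne_zero (by omega) (by omega))
  have hKe : Even (κ * q) := hκe.mul_right q
  have hq0 : (q:ℂ) ≠ 0 := Nat.cast_ne_zero.mpr (by omega)
  have hU0κ : ∀ k : ℤ, U0 (k + (κ:ℤ)) = U0 k := by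
    intro k
    have h1 := inversion (κ * q) hK1 hKe U0 hU0_per k
    have h2 := inversion (κ * q) hK1 hKe U0 hU0_per (k + κ)
    rw [← h1, ← h2]
    unfold idft
    refine Finset.sum_congr rfl fun j hjB => ?_
    by_cases hd : (q:ℤ) ∣ j
    · obtain ⟨m, hm⟩ := hd
      congr 1
      have he : (2 * (Real.pi:ℂ) * Complex.I * (j:ℂ) * ((k + (κ:ℤ) : ℤ):ℂ)) / ((κ*q:ℕ):ℂ)
          = (2 * (Real.pi:ℂ) * Complex.I * (j:ℂ) * (k:ℂ)) / ((κ*q:ℕ):ℂ)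
            + (m:ℂ) * (2 * (Real.pi:ℂ) * Complex.I) := by
        rw [hm]
        have hκ0 : (κ:ℂ) ≠ 0 := Nat.cast_ne_zero.mpr (by omega)
        push_cast
        field_simp
      rw [he, Complex.exp_add, exp_two_pi_int m, mul_one]
    · rw [hU0q j hjB hd, mul_zero, mul_zero]
  have key : ∀ n : ℕ, ∀ k : ℤ, Un n k =
      Complex.exp (-(Complex.I * (σ:ℂ) * (n:ℂ) * (τ:ℂ)) * ((‖U0 k‖ : ℂ))^2) * U0 k := by
    intro n
    induction n with
    | zero => intro k; simp [h0]
    | succ n ih =>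
        have habs : ∀ l : ℤ, ‖Un n l‖ = ‖U0 l‖ := by
          intro l
          rw [ih l, norm_mul]
          have he : -(Complex.I * (σ:ℂ) * (n:ℂ) * (τ:ℂ)) * ((‖U0 l‖ : ℂ))^2
              = ((-(σ * (n:ℝ) * τ * (‖U0 l‖)^2) : ℝ) : ℂ) * Complex.I := by
            push_cast; ring
          rw [he, Complex.norm_exp_ofReal_mul_I, one_mul]
        set V : ℤ → ℂ := fun k => Complex.exp (-(Complex.I * (σ : ℂ) * (τ : ℂ)) *
            ((‖Un n k‖ : ℂ)) ^ 2) * Un n k with hV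
        have hVform : ∀ l : ℤ, V l =
            Complex.exp (-(Complex.I * (σ:ℂ) * ((n:ℂ)+1) * (τ:ℂ)) * ((‖U0 l‖ : ℂ))^2) * U0 l := by
          intro l
          rw [hV]
          simp only
          rw [habs l, ih l, ← mul_assoc, ← Complex.exp_add]
          congr 2
          ring
        have hVκ : ∀ l : ℤ, V (l + (κ:ℤ)) = V l := by
          intro l; rw [hVform, hVform, hU0κ l]
        have hVK : ∀ l : ℤ, V (l + ((κ*q:ℕ):ℤ)) = V l := by
          intro l; rw [hVform, hVform, hU0_per l]
        have hflow : ∀ k : ℤ, Un (n+1) k = V k := by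
          intro k
          rw [hrec n, ← hV]
          show freeFlowK (κ*q) τ V k = V k
          simp only [freeFlowK, idft]
          have hcongr : ∀ j ∈ BK (κ*q),
              Complex.exp ((2 * (Real.pi:ℂ) * Complex.I * (j:ℂ) * (k:ℂ)) / ((κ*q:ℕ):ℂ)) *
                (Complex.exp (-(Complex.I * (τ:ℂ)) * (j:ℂ)^2) * dft (κ*q) V j)
              = Complex.exp ((2 * (Real.pi:ℂ) * Complex.I * (j:ℂ) * (k:ℂ)) / ((κ*q:ℕ):ℂ)) *
                dft (κ*q) V j := by
            intro j _
            by_cases hd : (q:ℤ) ∣ j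
            · obtain ⟨m, hm⟩ := hd
              rcases hτ with hτ' | hτ'
              · have he : -(Complex.I * (τ:ℂ)) * (j:ℂ)^2
                    = ((-(p * (q:ℤ) * m^2) : ℤ):ℂ) * (2 * (Real.pi:ℂ) * Complex.I) := by
                  rw [hτ', hm]
                  push_cast
                  field_simp
                rw [he, exp_two_pi_int, one_mul]
              · have he : -(Complex.I * (τ:ℂ)) * (j:ℂ)^2
                    = ((-(p * m^2) : ℤ):ℂ) * (2 * (Real.pi:ℂ) * Complex.I) := by
                  rw [hτ', hm]
                  push_cast
                  field_simp
                rw [he, exp_two_pi_int, one_mul]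
            · rw [dft_vanish q κ hq hκ1 hκe V hVκ j hd, mul_zero, mul_zero]
          rw [Finset.sum_congr rfl hcongr]
          have hinv := inversion (κ*q) hK1 hKe V hVK k
          simpa only [idft] using hinv
        intro k
        rw [hflow k, hVform k]
        congr 2
        push_cast
        ring
  intro n k _
  exact key n k
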